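/- For every constant K ≥ 1 there exists a constant C = C(K) > 0 with the following property. Let W_1(0), …, W_L(0) be weight matrices of a depth-L width-m linear network satisfying ‖W_{b:a}(0)‖ ≤ K·√L·m^{(b−a+1)/2} for all 1 < a ≤ b < L. Let R > 0, let Δ_1, …, Δ_L be matrices of matching shapes with ‖Δ_i‖_F ≤ R for every i, and set W_i = W_i(0) + Δ_i. If m ≥ C·L³·R², then for all 1 < i ≤ j < L, ‖W_{j:i} − W_{j:i}(0)‖ ≤ 0.05·√L·m^{(j−i+1)/2}. -/

import Mathlib

open MeasureTheory ProbabilityTheory Matrix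
open scoped BigOperators ENNReal

noncomputable section

/-- `W_j * W_{j-1} * ⋯ * W_i` for a family of square matrices (identity if `j < i`). -/
def midProd {m : ℕ} (W : ℕ → Matrix (Fin m) (Fin m) ℝ) (i j : ℕ) :
    Matrix (Fin m) (Fin m) ℝ :=
  (((List.range' i (j + 1 - i)).reverse).map W).prod

/-- Euclidean norm of a vector. -/
def enorm' {a : ℕ} (v : Fin a → ℝ) : ℝ := Real.sqrt (∑ i, v i ^ 2)

/-- Largest singular value (spectral norm): supremum of `‖A v‖` over unit vectors `v`. -/
def smax {a b : ℕ} (A : Matrix (Fin a) (Fin b) ℝ) : ℝ :=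
  ⨆ v : {v : Fin b → ℝ // ∑ j, v j ^ 2 = 1}, enorm' (A.mulVec v.1)

/-- Smallest singular value: infimum of `‖A v‖` over unit vectors `v`. -/
def smin {a b : ℕ} (A : Matrix (Fin a) (Fin b) ℝ) : ℝ :=
  ⨅ v : {v : Fin b → ℝ // ∑ j, v j ^ 2 = 1}, enorm' (A.mulVec v.1)

/-- Squared Frobenius norm of a matrix. -/
def frobSq {a b : ℕ} (A : Matrix (Fin a) (Fin b) ℝ) : ℝ := ∑ i, ∑ j, A i j ^ 2

/-- Frobenius norm of a matrix. -/
def frob {a b : ℕ} (A : Matrix (Fin a) (Fin b) ℝ) : ℝ := Real.sqrt (frobSq A)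

/-- Index type for all the entries of the weight matrices
`W_1 ∈ ℝ^{m×din}`, `W_2, …, W_{L-1} ∈ ℝ^{m×m}`, `W_L ∈ ℝ^{dout×m}`. -/
def InitIdx (L m din dout : ℕ) : Type :=
  (Fin m × Fin din) ⊕ (({k : ℕ // 2 ≤ k ∧ k ≤ L - 1}) × (Fin m × Fin m)) ⊕ (Fin dout × Fin m)

/-- The family of all entries of the weight matrices. -/
def initEntry {Ω : Type*} (L m din dout : ℕ)
    (W1 : Ω → Matrix (Fin m) (Fin din) ℝ)
    (Wmid : ℕ → Ω → Matrix (Fin m) (Fin m) ℝ)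
    (WL : Ω → Matrix (Fin dout) (Fin m) ℝ) :
    InitIdx L m din dout → Ω → ℝ :=
  fun idx ω =>
    match idx with
    | Sum.inl p => W1 ω p.1 p.2
    | Sum.inr (Sum.inl p) => Wmid p.1.1 ω p.2.1 p.2.2
    | Sum.inr (Sum.inr p) => WL ω p.1 p.2


lemma enorm'_eq_norm {a : ℕ} (v : Fin a → ℝ) :
    enorm' v = ‖(WithLp.equiv 2 (Fin a → ℝ)).symm v‖ := by
  rw [EuclideanSpace.norm_eq]
  simp [enorm', sq_abs]

lemma enorm'_nonneg {a : ℕ} (v : Fin a → ℝ) : 0 ≤ enorm' v := Real.sqrt_nonneg _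

lemma enorm'_add_le {a : ℕ} (v w : Fin a → ℝ) : enorm' (v + w) ≤ enorm' v + enorm' w := by
  simp only [enorm'_eq_norm, WithLp.equiv_symm_apply, WithLp.toLp_add]
  exact norm_add_le _ _

lemma enorm'_smul {a : ℕ} (c : ℝ) (v : Fin a → ℝ) : enorm' (c • v) = |c| * enorm' v := by
  simp only [enorm'_eq_norm, WithLp.equiv_symm_apply, WithLp.toLp_smul]
  rw [norm_smul, Real.norm_eq_abs]

lemma enorm'_sq {a : ℕ} (v : Fin a → ℝ) : enorm' v ^ 2 = ∑ i, v i ^ 2 := by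
  rw [enorm', Real.sq_sqrt]; positivity

lemma frobSq_nonneg {a b : ℕ} (A : Matrix (Fin a) (Fin b) ℝ) : 0 ≤ frobSq A := by
  unfold frobSq; positivity

lemma enorm'_mulVec_le_frob {a b : ℕ} (A : Matrix (Fin a) (Fin b) ℝ) (v : Fin b → ℝ) :
    enorm' (A.mulVec v) ≤ frob A * enorm' v := by
  have h : ∑ i, (A.mulVec v) i ^ 2 ≤ frobSq A * ∑ j, v j ^ 2 := by
    rw [frobSq, Finset.sum_mul]
    refine Finset.sum_le_sum fun i _ => ?_
    simpa [Matrix.mulVec, dotProduct] using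
      Finset.sum_mul_sq_le_sq_mul_sq Finset.univ (fun j => A i j) v
  calc enorm' (A.mulVec v) ≤ Real.sqrt (frobSq A * ∑ j, v j ^ 2) := Real.sqrt_le_sqrt h
    _ = frob A * enorm' v := by rw [Real.sqrt_mul (frobSq_nonneg A), frob, enorm']

lemma unit_nonempty {b : ℕ} (hb : 0 < b) : Nonempty {v : Fin b → ℝ // ∑ j, v j ^ 2 = 1} := by
  refine ⟨⟨Pi.single ⟨0, hb⟩ 1, ?_⟩⟩
  rw [Finset.sum_eq_single (⟨0, hb⟩ : Fin b)]
  · simp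
  · intro j _ hj; simp [Pi.single_apply, hj]
  · simp

section SmaxLemmas
variable {a b c : ℕ}

lemma enorm'_unit {v : {v : Fin b → ℝ // ∑ j, v j ^ 2 = 1}} : enorm' v.1 = 1 := by
  rw [enorm', v.2, Real.sqrt_one]

lemma smax_bddAbove (hb : 0 < b) (A : Matrix (Fin a) (Fin b) ℝ) :
    BddAbove (Set.range fun v : {v : Fin b → ℝ // ∑ j, v j ^ 2 = 1} =>
      enorm' (A.mulVec v.1)) := by
  refine ⟨frob A, ?_⟩
  rintro x ⟨v, rfl⟩
  have := enorm'_mulVec_le_frob A v.1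
  rwa [enorm'_unit, mul_one] at this

lemma smax_le (hb : 0 < b) {A : Matrix (Fin a) (Fin b) ℝ} {c : ℝ}
    (h : ∀ v : {v : Fin b → ℝ // ∑ j, v j ^ 2 = 1}, enorm' (A.mulVec v.1) ≤ c) :
    smax A ≤ c := by
  haveI := unit_nonempty hb
  exact ciSup_le h

lemma le_smax (hb : 0 < b) (A : Matrix (Fin a) (Fin b) ℝ)
    (v : {v : Fin b → ℝ // ∑ j, v j ^ 2 = 1}) : enorm' (A.mulVec v.1) ≤ smax A :=
  le_ciSup (smax_bddAbove hb A) v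

lemma smax_nonneg (hb : 0 < b) (A : Matrix (Fin a) (Fin b) ℝ) : 0 ≤ smax A := by
  obtain ⟨v⟩ := unit_nonempty hb
  exact (enorm'_nonneg _).trans (le_smax hb A v)

lemma smax_le_frob (hb : 0 < b) (A : Matrix (Fin a) (Fin b) ℝ) : smax A ≤ frob A := by
  refine smax_le hb fun v => ?_
  have := enorm'_mulVec_le_frob A v.1
  rwa [enorm'_unit, mul_one] at this

lemma enorm'_mulVec_le (hb : 0 < b) (A : Matrix (Fin a) (Fin b) ℝ) (w : Fin b → ℝ) :
    enorm' (A.mulVec w) ≤ smax A * enorm' w := by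
  rcases eq_or_ne w 0 with rfl | hw
  · simp [Matrix.mulVec_zero, enorm']
  · have hsum : 0 < ∑ j, w j ^ 2 := by
      by_contra h
      push_neg at h
      have h0 : ∑ j, w j ^ 2 = 0 := le_antisymm h (by positivity)
      have hz := (Finset.sum_eq_zero_iff_of_nonneg (fun j _ => sq_nonneg (w j))).mp h0
      exact hw (funext fun j => by
        have := hz j (Finset.mem_univ j)
        exact pow_eq_zero_iff (two_ne_zero) |>.mp this)
    have hc : 0 < enorm' w := Real.sqrt_pos.mpr hsum
    set cc := enorm' w with hcc
    have hccsq : cc ^ 2 = ∑ j, w j ^ 2 := enorm'_sq w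
    set u : Fin b → ℝ := cc⁻¹ • w with hu
    have hunit : ∑ j, u j ^ 2 = 1 := by
      simp only [hu, Pi.smul_apply, smul_eq_mul, mul_pow, ← Finset.mul_sum, ← hccsq]
      field_simp
    have hw' : A.mulVec w = cc • A.mulVec u := by
      rw [hu, Matrix.mulVec_smul, smul_smul, mul_inv_cancel₀ hc.ne', one_smul]
    rw [hw', enorm'_smul, abs_of_pos hc, mul_comm]
    exact mul_le_mul_of_nonneg_right (le_smax hb A ⟨u, hunit⟩) hc.le

lemma smax_mul_le (hb : 0 < b) (hc : 0 < c) (A : Matrix (Fin a) (Fin b) ℝ)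
    (B : Matrix (Fin b) (Fin c) ℝ) : smax (A * B) ≤ smax A * smax B := by
  refine smax_le hc fun v => ?_
  rw [← Matrix.mulVec_mulVec]
  calc enorm' (A.mulVec (B.mulVec v.1)) ≤ smax A * enorm' (B.mulVec v.1) :=
        enorm'_mulVec_le hb A _
    _ ≤ smax A * smax B := by
        refine mul_le_mul_of_nonneg_left ?_ (smax_nonneg hb A)
        have := le_smax hc B v
        exact this

lemma smax_add_le (hb : 0 < b) (A B : Matrix (Fin a) (Fin b) ℝ) :
    smax (A + B) ≤ smax A + smax B := by
  refine smax_le hb fun v => ?_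
  rw [Matrix.add_mulVec]
  exact (enorm'_add_le _ _).trans (add_le_add (le_smax hb A v) (le_smax hb B v))

lemma smax_one (hb : 0 < b) : smax (1 : Matrix (Fin b) (Fin b) ℝ) = 1 := by
  haveI := unit_nonempty hb
  rw [smax]
  have : ∀ v : {v : Fin b → ℝ // ∑ j, v j ^ 2 = 1},
      enorm' ((1 : Matrix (Fin b) (Fin b) ℝ).mulVec v.1) = 1 := fun v => by
    rw [Matrix.one_mulVec]; exact enorm'_unit
  simp only [this]
  exact ciSup_const

lemma smax_sum_le {ι : Type*} (hb : 0 < b) (s : Finset ι)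
    (f : ι → Matrix (Fin a) (Fin b) ℝ) :
    smax (∑ t ∈ s, f t) ≤ ∑ t ∈ s, smax (f t) := by
  classical
  induction s using Finset.induction_on with
  | empty =>
      simp only [Finset.sum_empty, Finset.sum_empty]
      refine le_of_eq (le_antisymm ?_ (smax_nonneg hb 0))
      refine smax_le hb fun v => ?_
      simp [Matrix.zero_mulVec, enorm']
  | insert _ _ h ih =>
      rw [Finset.sum_insert h, Finset.sum_insert h]
      exact (smax_add_le hb _ _).trans (add_le_add le_rfl ih)

end SmaxLemmas


lemma midProd_of_lt {m : ℕ} (W : ℕ → Matrix (Fin m) (Fin m) ℝ) {i j : ℕ} (h : j < i) :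
    midProd W i j = 1 := by
  have : j + 1 - i = 0 := by omega
  simp [midProd, this]

lemma midProd_self {m : ℕ} (W : ℕ → Matrix (Fin m) (Fin m) ℝ) (i : ℕ) :
    midProd W i i = W i := by
  have : i + 1 - i = 1 := by omega
  simp [midProd, this, List.range'_succ]

lemma midProd_succ_right {m : ℕ} (W : ℕ → Matrix (Fin m) (Fin m) ℝ) {i j : ℕ} (h : i ≤ j + 1) :
    midProd W i (j + 1) = W (j + 1) * midProd W i j := by
  have h1 : j + 1 + 1 - i = 1 + (j + 1 - i) := by omega
  have h2 : i + (j + 1 - i) = j + 1 := by omega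
  rw [midProd, h1, Nat.add_comm 1 (j + 1 - i), ← List.range'_append_1 (s := i) (m := j + 1 - i) (n := 1), h2]
  simp [midProd, List.range'_succ]

lemma telescope {m : ℕ} (A B : ℕ → Matrix (Fin m) (Fin m) ℝ) :
    ∀ n i : ℕ, 1 ≤ i →
      midProd A i (i + n) - midProd B i (i + n) =
        ∑ t ∈ Finset.range (n + 1),
          midProd B (i + t + 1) (i + n) * (A (i + t) - B (i + t)) * midProd A i (i + t - 1) := by
  intro n
  induction n with
  | zero =>
      intro i hi
      rw [Finset.sum_range_one]
      simp only [Nat.add_zero]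
      rw [midProd_self, midProd_self, midProd_of_lt B (by omega), midProd_of_lt A (by omega),
        one_mul, mul_one]
  | succ n ih =>
      intro i hi
      simp only [← Nat.add_assoc]
      rw [midProd_succ_right A (by omega), midProd_succ_right B (by omega),
        Finset.sum_range_succ]
      simp only [← Nat.add_assoc]
      rw [midProd_of_lt B (by omega : i + n + 1 < i + n + 1 + 1), Nat.add_sub_cancel, one_mul]
      have hsum : ∀ t ∈ Finset.range (n + 1),
          midProd B (i + t + 1) (i + n + 1) * (A (i + t) - B (i + t)) * midProd A i (i + t - 1) =
          B (i + n + 1) * (midProd B (i + t + 1) (i + n) * (A (i + t) - B (i + t)) *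
            midProd A i (i + t - 1)) := by
        intro t ht
        have htn : t < n + 1 := Finset.mem_range.mp ht
        rw [midProd_succ_right B (by omega)]
        simp only [mul_assoc]
      rw [Finset.sum_congr rfl hsum, ← Finset.mul_sum, ← ih i hi]
      noncomm_ring

set_option maxHeartbeats 1000000 in
/-- perturbation bound for products of middle layers. -/
theorem perturbation_middle_products :
    ∀ K : ℝ, 1 ≤ K → ∃ C > (0 : ℝ),
      ∀ (L m din dout : ℕ), 2 ≤ L → 1 ≤ m → 1 ≤ din → 1 ≤ dout → dout ≤ m →
      ∀ (W10 : Matrix (Fin m) (Fin din) ℝ) (Wmid0 : ℕ → Matrix (Fin m) (Fin m) ℝ)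
        (WL0 : Matrix (Fin dout) (Fin m) ℝ),
      (∀ a b : ℕ, 1 < a → a ≤ b → b < L →
        smax (midProd Wmid0 a b) ≤ K * Real.sqrt L * (m : ℝ) ^ (((b : ℝ) - a + 1) / 2)) →
      ∀ R : ℝ, 0 < R →
      ∀ (Δ1 : Matrix (Fin m) (Fin din) ℝ) (Δmid : ℕ → Matrix (Fin m) (Fin m) ℝ)
        (ΔL : Matrix (Fin dout) (Fin m) ℝ),
      frob Δ1 ≤ R → (∀ k, 2 ≤ k → k ≤ L - 1 → frob (Δmid k) ≤ R) → frob ΔL ≤ R →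
      (m : ℝ) ≥ C * L ^ 3 * R ^ 2 →
      ∀ i j : ℕ, 1 < i → i ≤ j → j < L →
        smax (midProd (fun k => Wmid0 k + Δmid k) i j - midProd Wmid0 i j) ≤
          0.05 * Real.sqrt L * (m : ℝ) ^ (((j : ℝ) - i + 1) / 2) := by
  intro K hK
  have hCpos : (0:ℝ) < 20 * K * (K + 1) := by nlinarith
  refine ⟨(20 * K * (K + 1)) ^ 2, pow_pos hCpos 2, ?_⟩
  intro L m din dout hL hm hdin hdout hdm W10 Wmid0 WL0 hW0 R hR Δ1 Δmid ΔL hΔ1 hΔ hΔL hmC i j hi hij hj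
  have hm0 : 0 < m := hm
  set A : ℕ → Matrix (Fin m) (Fin m) ℝ := fun k => Wmid0 k + Δmid k with hA
  set sL : ℝ := Real.sqrt L with hsLdef
  set M : ℝ := (m : ℝ) with hMdef
  have hM0 : (0 : ℝ) < M := by rw [hMdef]; exact_mod_cast hm0
  have hM1 : (1 : ℝ) ≤ M := by rw [hMdef]; exact_mod_cast hm
  have hL1 : (1 : ℝ) ≤ (L : ℝ) := by exact_mod_cast (by omega : 1 ≤ L)
  have hsL1 : (1 : ℝ) ≤ sL := by
    have := Real.sqrt_le_sqrt hL1
    rwa [Real.sqrt_one] at this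
  have hK0 : (0 : ℝ) ≤ K := by linarith
  have hsL0 : (0 : ℝ) ≤ sL := by linarith
  -- the core scalar inequality
  have hsqrtm : 20 * K * (K + 1) * ((L : ℝ) * sL) * R ≤ Real.sqrt M := by
    have h1 : Real.sqrt ((20 * K * (K + 1)) ^ 2 * (L : ℝ) ^ 3 * R ^ 2) ≤ Real.sqrt M :=
      Real.sqrt_le_sqrt hmC
    have h2 : Real.sqrt ((20 * K * (K + 1)) ^ 2 * (L : ℝ) ^ 3 * R ^ 2)
        = 20 * K * (K + 1) * ((L : ℝ) * sL) * R := by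
      rw [Real.sqrt_mul (by positivity), Real.sqrt_mul (by positivity),
        Real.sqrt_sq (by nlinarith), Real.sqrt_sq hR.le,
        show ((L : ℝ) ^ 3) = ((L : ℝ))^2 * L by ring,
        Real.sqrt_mul (by positivity), Real.sqrt_sq (by positivity)]
      try ring
    linarith [h2 ▸ h1]
  -- main induction
  have hLL : sL * sL = (L : ℝ) := Real.mul_self_sqrt (by positivity)
  have key : ∀ n : ℕ, ∀ p : ℕ, 1 < p → p + n < L →
      smax (midProd A p (p + n) - midProd Wmid0 p (p + n)) ≤
        0.05 * sL * M ^ (((n : ℝ) + 1) / 2) := by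
    clear hij hj hi
    intro n
    induction n using Nat.strong_induction_on with
    | _ n ih =>
      intro i hi2 hiL
      rw [telescope A Wmid0 n i (by omega)]
      set Kc : ℝ := K * (K + 0.05) * (L : ℝ) * R * M ^ ((n : ℝ) / 2) with hKc
      have hterm : ∀ t ∈ Finset.range (n + 1),
          smax (midProd Wmid0 (i + t + 1) (i + n) * (A (i + t) - Wmid0 (i + t)) *
            midProd A i (i + t - 1)) ≤ Kc := by
        intro t ht
        have htn : t ≤ n := by have := Finset.mem_range.mp ht; omega
        have hΔt : A (i + t) - Wmid0 (i + t) = Δmid (i + t) := by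
          rw [hA]; exact add_sub_cancel_left _ _
        -- bound 1
        have hb1 : smax (midProd Wmid0 (i + t + 1) (i + n)) ≤
            K * sL * M ^ (((n : ℝ) - t) / 2) := by
          rcases eq_or_lt_of_le htn with rfl | htlt
          · rw [midProd_of_lt Wmid0 (by omega), smax_one hm0]
            have hz : ((t : ℝ) - t) / 2 = 0 := by ring
            rw [hz, Real.rpow_zero, mul_one]
            nlinarith
          · have := hW0 (i + t + 1) (i + n) (by omega) (by omega) hiL
            have hexp : (((i + n : ℕ) : ℝ) - ((i + t + 1 : ℕ) : ℝ) + 1) / 2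
                = ((n : ℝ) - t) / 2 := by push_cast; ring
            rwa [hexp] at this
        -- bound 2
        have hb2 : smax (Δmid (i + t)) ≤ R :=
          (smax_le_frob hm0 _).trans (hΔ (i + t) (by omega) (by omega))
        -- bound 3
        have hb3 : smax (midProd A i (i + t - 1)) ≤ (K + 0.05) * sL * M ^ ((t : ℝ) / 2) := by
          rcases Nat.eq_zero_or_pos t with rfl | ht1
          · rw [midProd_of_lt A (by omega)]
            rw [smax_one hm0]
            have : ((0 : ℕ) : ℝ) / 2 = 0 := by norm_num
            rw [this, Real.rpow_zero, mul_one]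
            nlinarith
          · obtain ⟨s, rfl⟩ : ∃ s, t = s + 1 := ⟨t - 1, by omega⟩
            have hidx : i + (s + 1) - 1 = i + s := by omega
            rw [hidx]
            have hsplit : midProd A i (i + s) = midProd Wmid0 i (i + s) +
                (midProd A i (i + s) - midProd Wmid0 i (i + s)) := by abel
            have h0 := hW0 i (i + s) hi2 (by omega) (by omega)
            have hexp0 : (((i + s : ℕ) : ℝ) - (i : ℝ) + 1) / 2 = ((s : ℝ) + 1) / 2 := by
              push_cast; ring
            rw [hexp0] at h0
            have hIH := ih s (by omega) i hi2 (by omega)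
            have hexp1 : (((s + 1 : ℕ) : ℝ)) / 2 = ((s : ℝ) + 1) / 2 := by push_cast; ring
            rw [hexp1]
            calc smax (midProd A i (i + s)) ≤
                smax (midProd Wmid0 i (i + s)) +
                  smax (midProd A i (i + s) - midProd Wmid0 i (i + s)) := by
                  nth_rewrite 1 [hsplit]; exact smax_add_le hm0 _ _
              _ ≤ K * sL * M ^ (((s : ℝ) + 1) / 2) + 0.05 * sL * M ^ (((s : ℝ) + 1) / 2) :=
                  add_le_add h0 hIH
              _ = (K + 0.05) * sL * M ^ (((s : ℝ) + 1) / 2) := by ring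
        -- combine
        have hpow : M ^ (((n : ℝ) - t) / 2) * M ^ ((t : ℝ) / 2) = M ^ ((n : ℝ) / 2) := by
          rw [← Real.rpow_add hM0]; ring_nf
        have hnn1 : (0 : ℝ) ≤ K * sL * M ^ (((n : ℝ) - t) / 2) := by positivity
        have hprod : K * sL * M ^ (((n : ℝ) - t) / 2) * R *
            ((K + 0.05) * sL * M ^ ((t : ℝ) / 2)) = Kc := by
          rw [hKc, ← hLL, ← hpow]; ring
        calc smax (midProd Wmid0 (i + t + 1) (i + n) * (A (i + t) - Wmid0 (i + t)) *
              midProd A i (i + t - 1))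
            ≤ smax (midProd Wmid0 (i + t + 1) (i + n) * (A (i + t) - Wmid0 (i + t))) *
              smax (midProd A i (i + t - 1)) := smax_mul_le hm0 hm0 _ _
          _ ≤ (smax (midProd Wmid0 (i + t + 1) (i + n)) * smax (A (i + t) - Wmid0 (i + t))) *
              smax (midProd A i (i + t - 1)) :=
              mul_le_mul_of_nonneg_right (smax_mul_le hm0 hm0 _ _) (smax_nonneg hm0 _)
          _ ≤ (K * sL * M ^ (((n : ℝ) - t) / 2) * R) *
              ((K + 0.05) * sL * M ^ ((t : ℝ) / 2)) := by
              rw [hΔt]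
              refine mul_le_mul ?_ hb3 (smax_nonneg hm0 _) (by positivity)
              exact mul_le_mul hb1 hb2 (smax_nonneg hm0 _) hnn1
          _ = Kc := hprod
      calc smax (∑ t ∈ Finset.range (n + 1), midProd Wmid0 (i + t + 1) (i + n) *
            (A (i + t) - Wmid0 (i + t)) * midProd A i (i + t - 1))
          ≤ ∑ t ∈ Finset.range (n + 1), smax (midProd Wmid0 (i + t + 1) (i + n) *
            (A (i + t) - Wmid0 (i + t)) * midProd A i (i + t - 1)) := smax_sum_le hm0 _ _
        _ ≤ ∑ _t ∈ Finset.range (n + 1), Kc := Finset.sum_le_sum hterm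
        _ = ((n : ℝ) + 1) * Kc := by
            rw [Finset.sum_const, Finset.card_range, nsmul_eq_mul]; push_cast; ring
        _ ≤ 0.05 * sL * M ^ (((n : ℝ) + 1) / 2) := by
            have hMn : (0 : ℝ) ≤ M ^ ((n : ℝ) / 2) := by positivity
            have hsplit2 : M ^ (((n : ℝ) + 1) / 2) = Real.sqrt M * M ^ ((n : ℝ) / 2) := by
              rw [show ((n : ℝ) + 1) / 2 = 1 / 2 + (n : ℝ) / 2 by ring, Real.rpow_add hM0,
                ← Real.sqrt_eq_rpow]
            rw [hsplit2, hKc]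
            have hn1L : ((n : ℝ) + 1) ≤ (L : ℝ) := by exact_mod_cast (by omega : n + 1 ≤ L)
            have hcore : ((n : ℝ) + 1) * (K * (K + 0.05) * (L : ℝ) * R) ≤
                0.05 * sL * Real.sqrt M := by
              have h1 : ((n : ℝ) + 1) * (K * (K + 0.05) * (L : ℝ) * R) ≤
                  (L : ℝ) * (K * (K + 1) * (L : ℝ) * R) := by
                have hKK : K * (K + 0.05) * (L : ℝ) * R ≤ K * (K + 1) * (L : ℝ) * R := by
                  have : K * (K + 0.05) ≤ K * (K + 1) := by nlinarith
                  have hLR : (0 : ℝ) ≤ (L : ℝ) * R := by positivity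
                  nlinarith
                have hnn : (0 : ℝ) ≤ K * (K + 0.05) * (L : ℝ) * R := by positivity
                calc ((n : ℝ) + 1) * (K * (K + 0.05) * (L : ℝ) * R)
                    ≤ (L : ℝ) * (K * (K + 0.05) * (L : ℝ) * R) :=
                      mul_le_mul_of_nonneg_right hn1L hnn
                  _ ≤ (L : ℝ) * (K * (K + 1) * (L : ℝ) * R) :=
                      mul_le_mul_of_nonneg_left hKK (by positivity)
              have h2 : (L : ℝ) * (K * (K + 1) * (L : ℝ) * R) ≤ 0.05 * sL * Real.sqrt M := by
                have hmul := mul_le_mul_of_nonneg_left hsqrtm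
                  (show (0 : ℝ) ≤ 0.05 * sL by positivity)
                have heq : (L : ℝ) * (K * (K + 1) * (L : ℝ) * R) =
                    0.05 * sL * (20 * K * (K + 1) * ((L : ℝ) * sL) * R) := by
                  rw [← hLL]; ring
                rw [heq]
                exact hmul
              linarith
            calc ((n : ℝ) + 1) * (K * (K + 0.05) * (L : ℝ) * R * M ^ ((n : ℝ) / 2))
                = (((n : ℝ) + 1) * (K * (K + 0.05) * (L : ℝ) * R)) * M ^ ((n : ℝ) / 2) := by ring
              _ ≤ (0.05 * sL * Real.sqrt M) * M ^ ((n : ℝ) / 2) :=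
                  mul_le_mul_of_nonneg_right hcore hMn
              _ = 0.05 * sL * (Real.sqrt M * M ^ ((n : ℝ) / 2)) := by ring
  -- conclude
  obtain ⟨n, rfl⟩ : ∃ n, j = i + n := ⟨j - i, by omega⟩
  have hexp : (((i + n : ℕ) : ℝ) - (i : ℝ) + 1) / 2 = ((n : ℝ) + 1) / 2 := by push_cast; ring
  rw [hexp]
  exact key n i hi hj
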